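/- Let ((g,[2]_g),D_g) be a ResLieDer pair over F and ((h,[2]_h),D_h) a strongly abelian ResLieDer pair over F. Let ψ : g×g → h be alternating F-bilinear, let ς : g → h satisfy ς(a·x) = a²·ς(x) and ς(x+y) = ς(x) + ς(y) + ψ(x,y), and let τ : g → h be F-linear. On g ⊕ h define [x+h₁, y+h₂]_ψ = [x,y] + ψ(x,y), (x+h)^[2]_ς = x^[2]_g + ς(x), and D_τ(x+h) = D_g(x) + τ(x) + D_h(h). Then ((g ⊕ h, [·,·]_ψ, [2]_ς), D_τ) is a ResLieDer pair if and only if for all x,y,z ∈ g: ψ(x,[y,z]) + ψ(y,[z,x]) + ψ(z,[x,y]) = 0; ψ(x^[2]_g, y) + ψ([x,y], x) = 0; τ([x,y]) + D_h(ψ(x,y)) + ψ(D_g(x),y) + ψ(x,D_g(y)) = 0; and τ(x^[2]_g) + D_h(ς(x)) + ψ(x,D_g(x)) = 0. -/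

import Mathlib

/-- the data `(ψ, ς, τ)` makes `((g ⊕ h, [·,·]_ψ, [2]_ς), D_τ)` a ResLieDer
pair if and only if `((ψ,ς),τ)` is a 2-cocycle with values in the trivial representation. -/
theorem stmt11
    {F : Type*} [Field F] [CharP F 2]
    {g : Type*} [LieRing g] [LieAlgebra F g]
    {h : Type*} [AddCommGroup h] [Module F h]
    -- ResLieDer pair structure on g
    (sq : g → g)
    (hsq_ad : ∀ x y : g, ⁅sq x, y⁆ = ⁅x, ⁅x, y⁆⁆)
    (hsq_smul : ∀ (a : F) (x : g), sq (a • x) = a ^ 2 • sq x)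
    (hsq_add : ∀ x y : g, sq (x + y) = sq x + sq y + ⁅x, y⁆)
    (Dg : g →ₗ[F] g)
    (hDg_br : ∀ x y : g, Dg ⁅x, y⁆ = ⁅Dg x, y⁆ + ⁅x, Dg y⁆)
    (hDg_sq : ∀ x : g, Dg (sq x) = ⁅x, Dg x⁆)
    -- strongly abelian ResLieDer pair structure on h: zero bracket, zero 2-mapping,
    -- together with an arbitrary linear map Dh
    (Dh : h →ₗ[F] h)
    -- the cochain data (ψ, ς, τ)
    (ψ : g → g → h)
    (hψ₁ : ∀ (a : F) (x x' y : g), ψ (a • x + x') y = a • ψ x y + ψ x' y)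
    (hψ₂ : ∀ (a : F) (x y y' : g), ψ x (a • y + y') = a • ψ x y + ψ x y')
    (hψalt : ∀ x : g, ψ x x = 0)
    (ς : g → h)
    (hς_smul : ∀ (a : F) (x : g), ς (a • x) = a ^ 2 • ς x)
    (hς_add : ∀ x y : g, ς (x + y) = ς x + ς y + ψ x y)
    (τ : g →ₗ[F] h) :
    -- the structure maps on g ⊕ h
    (let br : g × h → g × h → g × h := fun p q => (⁅p.1, q.1⁆, ψ p.1 q.1)
     let sqς : g × h → g × h := fun p => (sq p.1, ς p.1)
     let Dτ : g × h → g × h := fun p => (Dg p.1, τ p.1 + Dh p.2)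
     -- ((g ⊕ h, br, sqς), Dτ) is a ResLieDer pair:
     (((∀ p q r : g × h, br p (br q r) + br q (br r p) + br r (br p q) = 0) ∧
       (∀ p q : g × h, br (sqς p) q = br p (br p q)) ∧
       (∀ (a : F) (p : g × h), sqς (a • p) = a ^ 2 • sqς p) ∧
       (∀ p q : g × h, sqς (p + q) = sqς p + sqς q + br p q) ∧
       (∀ p q : g × h, Dτ (br p q) = br (Dτ p) q + br p (Dτ q)) ∧
       (∀ p : g × h, Dτ (sqς p) = br p (Dτ p))) ↔
      -- if and only if ((ψ,ς),τ) is a 2-cocycle with trivial coefficients: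
      ((∀ x y z : g, ψ x ⁅y, z⁆ + ψ y ⁅z, x⁆ + ψ z ⁅x, y⁆ = 0) ∧
       (∀ x y : g, ψ (sq x) y + ψ ⁅x, y⁆ x = 0) ∧
       (∀ x y : g, τ ⁅x, y⁆ + Dh (ψ x y) + ψ (Dg x) y + ψ x (Dg y) = 0) ∧
       (∀ x : g, τ (sq x) + Dh (ς x) + ψ x (Dg x) = 0)))) := by

  have h2 : (2:F) = 0 := CharTwo.two_eq_zero
  have hh2 : ∀ v : h, v + v = 0 := fun v => by
    rw [← two_smul F v, h2, zero_smul]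
  have cancel : ∀ a b : h, a + b = 0 ↔ a = b := by
    intro a b
    constructor
    · intro hab
      have : a = -b := eq_neg_of_add_eq_zero_left hab
      rw [this, neg_eq_iff_add_eq_zero, hh2]
    · rintro rfl; exact hh2 _
  have ψadd₁ : ∀ x x' y : g, ψ (x + x') y = ψ x y + ψ x' y := by
    intro x x' y
    have := hψ₁ 1 x x' y
    simpa using this
  have ψadd₂ : ∀ x y y' : g, ψ x (y + y') = ψ x y + ψ x y' := by
    intro x y y'
    have := hψ₂ 1 x y y'
    simpa using this
  have ψsymm : ∀ x y : g, ψ x y = ψ y x := by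
    intro x y
    have e : ψ (x + y) (x + y) = 0 := hψalt _
    rw [ψadd₁, ψadd₂, ψadd₂, hψalt, hψalt, zero_add, add_zero] at e
    exact (cancel _ _).1 e
  intro br sqς Dτ
  constructor
  · rintro ⟨hJ, hS, -, -, hD, hDs⟩
    refine ⟨?_, ?_, ?_, ?_⟩
    · intro x y z
      have := congrArg Prod.snd (hJ (x, 0) (y, 0) (z, 0))
      simpa [br] using this
    · intro x y
      have e := congrArg Prod.snd (hS (x, 0) (y, 0))
      simp only [br, sqς] at e
      rw [ψsymm ⁅x,y⁆ x]
      rw [cancel]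
      exact e
    · intro x y
      have e := congrArg Prod.snd (hD (x, 0) (y, 0))
      simp only [br, Dτ, map_zero, add_zero] at e
      calc τ ⁅x, y⁆ + Dh (ψ x y) + ψ (Dg x) y + ψ x (Dg y)
          = (τ ⁅x, y⁆ + Dh (ψ x y)) + (ψ (Dg x) y + ψ x (Dg y)) := by abel
        _ = 0 := by rw [cancel]; exact e
    · intro x
      have e := congrArg Prod.snd (hDs (x, 0))
      simp only [br, sqς, Dτ, map_zero, add_zero] at e
      calc τ (sq x) + Dh (ς x) + ψ x (Dg x)
          = (τ (sq x) + Dh (ς x)) + ψ x (Dg x) := by abel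
        _ = 0 := by rw [cancel]; exact e
  · rintro ⟨c1, c2, c3, c4⟩
    refine ⟨?_, ?_, ?_, ?_, ?_, ?_⟩
    · intro p q r
      have h1 : ⁅p.1, ⁅q.1, r.1⁆⁆ + ⁅q.1, ⁅r.1, p.1⁆⁆ + ⁅r.1, ⁅p.1, q.1⁆⁆ = 0 :=
        lie_jacobi p.1 q.1 r.1
      exact Prod.ext h1 (c1 p.1 q.1 r.1)
    · intro p q
      refine Prod.ext (hsq_ad p.1 q.1) ?_
      have := (cancel _ _).1 (c2 p.1 q.1)
      simpa [ψsymm ⁅p.1, q.1⁆ p.1] using this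
    · intro a p
      refine Prod.ext ?_ ?_
      · simpa [sqς] using hsq_smul a p.1
      · simpa [sqς] using hς_smul a p.1
    · intro p q
      exact Prod.ext (hsq_add p.1 q.1) (hς_add p.1 q.1)
    · intro p q
      refine Prod.ext ?_ ?_
      · simpa using hDg_br p.1 q.1
      · have e := c3 p.1 q.1
        have e' : (τ ⁅p.1, q.1⁆ + Dh (ψ p.1 q.1)) + (ψ (Dg p.1) q.1 + ψ p.1 (Dg q.1)) = 0 := by
          calc (τ ⁅p.1, q.1⁆ + Dh (ψ p.1 q.1)) + (ψ (Dg p.1) q.1 + ψ p.1 (Dg q.1))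
              = τ ⁅p.1, q.1⁆ + Dh (ψ p.1 q.1) + ψ (Dg p.1) q.1 + ψ p.1 (Dg q.1) := by abel
            _ = 0 := e
        simpa [br, Dτ] using (cancel _ _).1 e'
    · intro p
      refine Prod.ext ?_ ?_
      · simpa using hDg_sq p.1
      · have e := c4 p.1
        have e' : (τ (sq p.1) + Dh (ς p.1)) + ψ p.1 (Dg p.1) = 0 := by
          calc (τ (sq p.1) + Dh (ς p.1)) + ψ p.1 (Dg p.1)
              = τ (sq p.1) + Dh (ς p.1) + ψ p.1 (Dg p.1) := by abel
            _ = 0 := e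
        simpa [br, sqς, Dτ] using (cancel _ _).1 e'
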